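/- For every compact set N contained in the set S³ˣ³₊ of symmetric positive-definite 3×3 real matrices, there exist a finite set Λ ⊂ ℚ³ of nonzero vectors with rational coordinates and smooth functions a_k : N → (0,∞), one for each k ∈ Λ, such that ∑_{k∈Λ} a_k(R)² k⊗k = R for every R ∈ N. -/

import Mathlib

/-!
STATEMENT 4 (Mikado flows, Lemma `l:Mikado` / Nash):
For every compact set `K` contained in the set of symmetric positive-definite 3×3 real
matrices, there exist a finite set `Λ ⊂ ℚ³` of nonzero vectors and smooth positive
functions `a_k` (each smooth on an open neighbourhood of `K`) such that
`∑_{k∈Λ} a_k(R)² k⊗k = R` for every `R ∈ K`.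
Matrices are modelled as `Fin 3 → Fin 3 → ℝ` (with the sup/Pi norm).
-/

open Set

noncomputable section

abbrev M3 : Type := Fin 3 → Fin 3 → ℝ

/-- symmetric positive definite -/
def IsSymPosDef (A : M3) : Prop :=
  (∀ i j, A i j = A j i) ∧
  ∀ v : Fin 3 → ℝ, v ≠ 0 → 0 < ∑ i, ∑ j, A i j * v i * v j

/-! ### Auxiliary material -/

section Aux

open Matrix in
set_option maxHeartbeats 1000000 in
theorem mikado_sum_univ_nine {M : Type*} [AddCommMonoid M] (f : Fin 9 → M) :
    ∑ i, f i = f 0 + f 1 + f 2 + f 3 + f 4 + f 5 + f 6 + f 7 + f 8 := by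
  rw [Fin.sum_univ_castSucc, Fin.sum_univ_eight]; rfl

/-- the nine base direction vectors -/
def mikadoBv : Fin 9 → Fin 3 → ℚ
  | 0, 0 => 1 | 0, 1 => 0 | 0, 2 => 0
  | 1, 0 => 0 | 1, 1 => 1 | 1, 2 => 0
  | 2, 0 => 0 | 2, 1 => 0 | 2, 2 => 1
  | 3, 0 => 1 | 3, 1 => 1 | 3, 2 => 0
  | 4, 0 => 1 | 4, 1 => 0 | 4, 2 => 1
  | 5, 0 => 0 | 5, 1 => 1 | 5, 2 => 1
  | 6, 0 => 1 | 6, 1 => -1 | 6, 2 => 0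
  | 7, 0 => 1 | 7, 1 => 0 | 7, 2 => -1
  | 8, 0 => 0 | 8, 1 => 1 | 8, 2 => -1

/-- the affine coefficient functions near the identity -/
def mikadoGam : Fin 9 → M3 → ℝ
  | 0 => fun X => X 0 0 - 1/2
  | 1 => fun X => X 1 1 - 1/2
  | 2 => fun X => X 2 2 - 1/2
  | 3 => fun X => 1/8 + X 0 1 / 2
  | 4 => fun X => 1/8 + X 0 2 / 2
  | 5 => fun X => 1/8 + X 1 2 / 2
  | 6 => fun X => 1/8 - X 0 1 / 2
  | 7 => fun X => 1/8 - X 0 2 / 2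
  | 8 => fun X => 1/8 - X 1 2 / 2

set_option maxHeartbeats 1000000 in
lemma mikadoGam_identity (X : M3) (hX : ∀ i j, X i j = X j i) (i j : Fin 3) :
    ∑ m : Fin 9, mikadoGam m X * (mikadoBv m i : ℝ) * (mikadoBv m j : ℝ) = X i j := by
  have h10 := hX 1 0
  have h20 := hX 2 0
  have h21 := hX 2 1
  fin_cases i <;> fin_cases j <;>
    · rw [mikado_sum_univ_nine]
      simp only [mikadoGam, mikadoBv, Fin.zero_eta, Fin.mk_one, Fin.reduceFinMk]
      norm_num
      linarith

/-- the neighbourhood of the identity where all coefficients are positive -/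
def MikadoNearId (X : M3) : Prop :=
  (∀ i, 1/2 < X i i) ∧ (∀ i j, i ≠ j → |X i j| < 1/4)

lemma mikadoGam_pos {X : M3} (hX : MikadoNearId X) (m : Fin 9) : 0 < mikadoGam m X := by
  obtain ⟨h1, h2⟩ := hX
  have a01 := abs_lt.1 (h2 0 1 (by decide))
  have a02 := abs_lt.1 (h2 0 2 (by decide))
  have a12 := abs_lt.1 (h2 1 2 (by decide))
  have := h1 0; have := h1 1; have := h1 2
  fin_cases m <;> simp only [mikadoGam] <;> linarith

lemma mikadoBv_ne_zero (m : Fin 9) : mikadoBv m ≠ 0 := by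
  fin_cases m <;>
    · intro h
      have h0 := congrFun h 0; have h1 := congrFun h 1; have h2 := congrFun h 2
      simp [mikadoBv] at h0 h1 h2

/-- congruence conjugation `P R Pᵀ`, entrywise -/
def mikadoConj (P R : M3) : M3 := fun i j => ∑ a, ∑ b, P i a * P j b * R a b

open Matrix in
lemma mikadoConj_eq_matrix (P R : M3) (i j : Fin 3) :
    mikadoConj P R i j = (Matrix.of P * Matrix.of R * (Matrix.of P)ᵀ) i j := by
  simp only [mikadoConj, Matrix.mul_apply, Matrix.transpose_apply, Matrix.of_apply,
    Finset.sum_mul, Finset.mul_sum]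
  rw [Finset.sum_comm]
  exact Finset.sum_congr rfl fun a _ => Finset.sum_congr rfl fun b _ => by ring

lemma mikadoConj_symm (P R : M3) (hR : ∀ i j, R i j = R j i) (i j : Fin 3) :
    mikadoConj P R i j = mikadoConj P R j i := by
  unfold mikadoConj
  rw [Finset.sum_comm]
  exact Finset.sum_congr rfl fun a _ => Finset.sum_congr rfl fun b _ => by rw [hR]; ring

open Matrix in
lemma mikadoConj_conj (P Q R : M3) (hQP : Matrix.of Q * Matrix.of P = 1) (i j : Fin 3) :
    mikadoConj Q (mikadoConj P R) i j = R i j := by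
  have h1 : Matrix.of (mikadoConj P R) = Matrix.of P * Matrix.of R * (Matrix.of P)ᵀ := by
    ext a b; exact mikadoConj_eq_matrix P R a b
  have h2 : mikadoConj Q (mikadoConj P R) i j
      = (Matrix.of Q * (Matrix.of P * Matrix.of R * (Matrix.of P)ᵀ) * (Matrix.of Q)ᵀ) i j := by
    rw [mikadoConj_eq_matrix, h1]
  rw [h2]
  have h3 : Matrix.of Q * (Matrix.of P * Matrix.of R * (Matrix.of P)ᵀ) * (Matrix.of Q)ᵀ
      = (Matrix.of Q * Matrix.of P) * Matrix.of R * (Matrix.of Q * Matrix.of P)ᵀ := by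
    rw [Matrix.transpose_mul]; noncomm_ring
  rw [h3, hQP]
  simp

set_option maxHeartbeats 1000000 in
lemma mikado_sum_swap (c : Fin 9 → ℝ) (u : Fin 9 → Fin 3 → ℝ) (Q : M3) (i j : Fin 3) :
    ∑ m : Fin 9, c m * (∑ a, Q i a * u m a) * (∑ b, Q j b * u m b)
      = ∑ a, ∑ b, Q i a * Q j b * (∑ m : Fin 9, c m * u m a * u m b) := by
  simp only [mikado_sum_univ_nine, Fin.sum_univ_three]
  ring

lemma mikado_continuous_entry (i a : Fin 3) : Continuous fun p : M3 => p i a :=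
  (continuous_apply a).comp (continuous_apply i)

lemma mikado_contDiff_entry (i a : Fin 3) : ContDiff ℝ (⊤:ℕ∞) fun p : M3 => p i a := by
  have h1 : ContDiff ℝ (⊤:ℕ∞) fun p : M3 => p i := contDiff_pi.1 contDiff_id i
  have h2 : ContDiff ℝ (⊤:ℕ∞) fun v : Fin 3 → ℝ => v a := contDiff_pi.1 contDiff_id a
  exact h2.comp h1

lemma mikado_contDiff_conj_entry (P : M3) (i a : Fin 3) :
    ContDiff ℝ (⊤:ℕ∞) fun R : M3 => mikadoConj P R i a := by
  unfold mikadoConj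
  exact ContDiff.sum fun x _ => ContDiff.sum fun b _ =>
    (contDiff_const.mul (mikado_contDiff_entry x b))

lemma mikado_contDiff_gam_conj (P : M3) (m : Fin 9) :
    ContDiff ℝ (⊤:ℕ∞) fun R : M3 => mikadoGam m (mikadoConj P R) := by
  fin_cases m <;>
    simp only [mikadoGam] <;>
    first
      | exact (mikado_contDiff_conj_entry P _ _).sub contDiff_const
      | exact contDiff_const.add ((mikado_contDiff_conj_entry P _ _).div_const _)
      | exact contDiff_const.sub ((mikado_contDiff_conj_entry P _ _).div_const _)

lemma mikado_isOpen_nearId (P : M3) : IsOpen {R : M3 | MikadoNearId (mikadoConj P R)} := by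
  have hent : ∀ i a : Fin 3, Continuous fun R : M3 => mikadoConj P R i a := fun i a =>
    (mikado_contDiff_conj_entry P i a).continuous
  have hset : {R : M3 | MikadoNearId (mikadoConj P R)} =
      (⋂ i, {R : M3 | 1/2 < mikadoConj P R i i}) ∩
      (⋂ i, ⋂ j, {R : M3 | i ≠ j → |mikadoConj P R i j| < 1/4}) := by
    ext R; simp [MikadoNearId, mem_iInter]
  rw [hset]
  refine IsOpen.inter (isOpen_iInter_of_finite fun i => ?_)
    (isOpen_iInter_of_finite fun i => isOpen_iInter_of_finite fun j => ?_)
  · exact isOpen_lt continuous_const (hent i i)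
  · by_cases h : i = j
    · simp [h]
    · have : {R : M3 | i ≠ j → |mikadoConj P R i j| < 1/4}
          = {R : M3 | |mikadoConj P R i j| < 1/4} := by ext R; simp [h]
      rw [this]
      exact isOpen_lt (continuous_abs.comp (hent i j)) continuous_const

open Matrix in
lemma mikado_posdef {A : M3} (hA : IsSymPosDef A) : Matrix.PosDef (Matrix.of A) := by
  rw [Matrix.posDef_iff_dotProduct_mulVec]
  constructor
  · ext i j
    simp [Matrix.conjTranspose_apply, Matrix.of_apply, hA.1 i j]
  · intro x hx
    have h0 := hA.2 x hx
    calc (0:ℝ) < ∑ i, ∑ j, A i j * x i * x j := h0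
      _ = star x ⬝ᵥ (Matrix.of A *ᵥ x) := by
          simp only [dotProduct, Matrix.mulVec, Matrix.of_apply, star_trivial, Finset.mul_sum]
          exact Finset.sum_congr rfl fun i _ => Finset.sum_congr rfl fun j _ => by ring

open Matrix MatrixOrder in
/-- every symmetric positive definite matrix is rationally congruent to a
matrix close to the identity -/
lemma mikado_exists_good_p {A : M3} (hA : IsSymPosDef A) :
    ∃ p : Fin 3 → Fin 3 → ℚ,
      (Matrix.of p).det ≠ 0 ∧ MikadoNearId (mikadoConj (fun i j => (p i j : ℝ)) A) := by
  have hpd := mikado_posdef hA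
  have hsd := hpd.posSemidef
  set M : Matrix (Fin 3) (Fin 3) ℝ := CFC.sqrt (Matrix.of A) with hMdef
  have hMsd : M.PosSemidef := (CFC.sqrt_nonneg (Matrix.of A)).posSemidef
  have hMM : M * M = Matrix.of A := CFC.sqrt_mul_sqrt_self _ hsd.nonneg
  have hdetA : 0 < (Matrix.of A).det := hpd.det_pos
  have hdetM : M.det ≠ 0 := by
    intro h
    rw [← hMM, Matrix.det_mul, h, mul_zero] at hdetA
    exact lt_irrefl _ hdetA
  have hMT : Mᵀ = M := by
    ext i j
    rw [Matrix.transpose_apply]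
    simpa using hMsd.1.apply i j
  have hMunit : IsUnit M.det := isUnit_iff_ne_zero.mpr hdetM
  set N : Matrix (Fin 3) (Fin 3) ℝ := M⁻¹ with hNdef
  have hNT : Nᵀ = N := by rw [hNdef, Matrix.transpose_nonsing_inv, hMT]
  have hconjN : mikadoConj (fun i j => N i j) A = fun i j => (1 : Matrix (Fin 3) (Fin 3) ℝ) i j := by
    funext i j
    have h1 : mikadoConj (fun i j => N i j) A i j = (N * Matrix.of A * Nᵀ) i j := by
      simp only [mikadoConj, Matrix.mul_apply, Matrix.transpose_apply, Finset.sum_mul,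
        Finset.mul_sum]
      rw [Finset.sum_comm]
      exact Finset.sum_congr rfl fun a _ => Finset.sum_congr rfl fun b _ => by
        rw [Matrix.of_apply]; ring
    rw [h1, ← hMM, hNT]
    have h2 : N * (M * M) * N = (N * M) * (M * N) := by noncomm_ring
    rw [h2, hNdef, Matrix.nonsing_inv_mul M hMunit, Matrix.mul_nonsing_inv M hMunit, one_mul]
  have hNmem : (fun i j => N i j) ∈
      {p : M3 | (Matrix.of p).det ≠ 0 ∧ MikadoNearId (mikadoConj p A)} := by
    constructor
    · show (Matrix.of fun i j => N i j).det ≠ 0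
      have h3 : (Matrix.of fun i j => N i j) = N := rfl
      rw [h3, hNdef, Matrix.det_nonsing_inv]
      simpa using hdetM
    · rw [hconjN]
      constructor
      · intro i; simp [Matrix.one_apply]; norm_num
      · intro i j hij; simp [Matrix.one_apply, hij]
  have hopen2 : IsOpen {p : M3 | MikadoNearId (mikadoConj p A)} := by
    · have hent : ∀ i a : Fin 3, Continuous fun p : M3 => mikadoConj p A i a := by
        intro i a
        unfold mikadoConj
        exact continuous_finset_sum _ fun x _ => continuous_finset_sum _ fun b _ =>
          ((mikado_continuous_entry i x).mul (mikado_continuous_entry a b)).mul continuous_const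
      have hset : {p : M3 | MikadoNearId (mikadoConj p A)} =
          (⋂ i, {p : M3 | 1/2 < mikadoConj p A i i}) ∩
          (⋂ i, ⋂ j, {p : M3 | i ≠ j → |mikadoConj p A i j| < 1/4}) := by
        ext p; simp [MikadoNearId, mem_iInter]
      rw [hset]
      refine IsOpen.inter (isOpen_iInter_of_finite fun i => ?_)
        (isOpen_iInter_of_finite fun i => isOpen_iInter_of_finite fun j => ?_)
      · exact isOpen_lt continuous_const (hent i i)
      · by_cases h : i = j
        · simp [h]
        · have : {p : M3 | i ≠ j → |mikadoConj p A i j| < 1/4}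
              = {p : M3 | |mikadoConj p A i j| < 1/4} := by ext p; simp [h]
          rw [this]
          exact isOpen_lt (continuous_abs.comp (hent i j)) continuous_const
  have hopen : IsOpen {p : M3 | (Matrix.of p).det ≠ 0 ∧ MikadoNearId (mikadoConj p A)} := by
    have hc : Continuous fun p : M3 => (Matrix.of p).det := Continuous.matrix_det continuous_id
    have hopen1 : IsOpen {p : M3 | (Matrix.of p).det ≠ 0} := isOpen_ne_fun hc continuous_const
    exact IsOpen.inter hopen1 hopen2
  rw [Metric.isOpen_iff] at hopen
  obtain ⟨δ, hδ, hball⟩ := hopen _ hNmem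
  have hq : ∀ i j : Fin 3, ∃ q : ℚ, |(q:ℝ) - N i j| < δ := by
    intro i j
    obtain ⟨r, hr⟩ := exists_rat_near (N i j) hδ
    exact ⟨r, by rw [abs_sub_comm]; exact hr⟩
  choose q hqq using hq
  refine ⟨q, ?_⟩
  have hmem : (fun i j => (q i j : ℝ)) ∈ Metric.ball (fun i j => N i j) δ := by
    rw [Metric.mem_ball, dist_pi_lt_iff hδ]
    intro i
    rw [dist_pi_lt_iff hδ]
    intro j
    rw [Real.dist_eq]
    exact hqq i j
  have h2 := hball hmem
  refine ⟨?_, h2.2⟩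
  intro h0
  apply h2.1
  have hcast : (Matrix.of fun i j => (q i j : ℝ)) = (Rat.castHom ℝ).mapMatrix (Matrix.of q) := rfl
  rw [hcast, ← RingHom.map_det, h0]
  simp

open Matrix in
/-- the congruence-transported representation identity -/
lemma mikado_transported (p : Fin 3 → Fin 3 → ℚ) (hdet : (Matrix.of p).det ≠ 0)
    (R : M3) (hR : ∀ i j, R i j = R j i) (i j : Fin 3) :
    ∑ m : Fin 9, mikadoGam m (mikadoConj (fun a b => (p a b : ℝ)) R)
        * (((Matrix.of p)⁻¹ *ᵥ mikadoBv m) i : ℝ) * (((Matrix.of p)⁻¹ *ᵥ mikadoBv m) j : ℝ)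
      = R i j := by
  set P : M3 := fun a b => (p a b : ℝ) with hP
  set qi : Matrix (Fin 3) (Fin 3) ℚ := (Matrix.of p)⁻¹ with hqi
  set Q : M3 := fun a b => (qi a b : ℝ) with hQ
  have hcastw : ∀ (m : Fin 9) (i : Fin 3),
      ((qi *ᵥ mikadoBv m) i : ℝ) = ∑ a, Q i a * (mikadoBv m a : ℝ) := by
    intro m i
    simp only [Matrix.mulVec, dotProduct, hQ]
    push_cast
    rfl
  have hQP : Matrix.of Q * Matrix.of P = 1 := by
    have hunit : IsUnit (Matrix.of p).det := isUnit_iff_ne_zero.mpr hdet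
    have h1 : qi * Matrix.of p = 1 := Matrix.nonsing_inv_mul _ hunit
    have h2 : (Rat.castHom ℝ).mapMatrix qi * (Rat.castHom ℝ).mapMatrix (Matrix.of p)
        = 1 := by
      rw [← _root_.map_mul ((Rat.castHom ℝ).mapMatrix) qi (Matrix.of p), h1, _root_.map_one]
    have h3 : Matrix.of Q = (Rat.castHom ℝ).mapMatrix qi := rfl
    have h4 : Matrix.of P = (Rat.castHom ℝ).mapMatrix (Matrix.of p) := rfl
    rw [h3, h4, h2]
  set X : M3 := mikadoConj P R with hX
  have hXsymm : ∀ a b, X a b = X b a := fun a b => mikadoConj_symm P R hR a b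
  calc ∑ m : Fin 9, mikadoGam m X * ((qi *ᵥ mikadoBv m) i : ℝ) * ((qi *ᵥ mikadoBv m) j : ℝ)
      = ∑ m : Fin 9, mikadoGam m X * (∑ a, Q i a * (mikadoBv m a : ℝ))
          * (∑ b, Q j b * (mikadoBv m b : ℝ)) := by
        exact Finset.sum_congr rfl fun m _ => by rw [hcastw, hcastw]
    _ = ∑ a, ∑ b, Q i a * Q j b
          * (∑ m : Fin 9, mikadoGam m X * (mikadoBv m a : ℝ) * (mikadoBv m b : ℝ)) :=
        mikado_sum_swap _ _ Q i j
    _ = ∑ a, ∑ b, Q i a * Q j b * X a b := by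
        exact Finset.sum_congr rfl fun a _ => Finset.sum_congr rfl fun b _ => by
          rw [mikadoGam_identity X hXsymm]
    _ = mikadoConj Q X i j := rfl
    _ = R i j := mikadoConj_conj P Q R hQP i j

lemma mikado_exists_pos_lt {ι : Type*} [Finite ι] (d : ι → ℝ) (hd : ∀ i, 0 < d i) :
    ∃ ε : ℝ, 0 < ε ∧ ∀ i, ε < d i := by
  cases isEmpty_or_nonempty ι with
  | inl h => exact ⟨1, one_pos, fun i => isEmptyElim i⟩
  | inr h =>
    have : Fintype ι := Fintype.ofFinite ι
    have hne : (Finset.univ : Finset ι).Nonempty := Finset.univ_nonempty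
    set m := Finset.univ.inf' hne d with hm
    obtain ⟨i0, _, hi0⟩ := Finset.exists_mem_eq_inf' hne d
    have hmpos : 0 < m := by rw [hm, hi0]; exact hd i0
    refine ⟨m / 2, by linarith, fun i => ?_⟩
    have : m ≤ d i := Finset.inf'_le d (Finset.mem_univ i)
    linarith

end Aux

theorem mikado_lemma (K : Set M3) (hKcompact : IsCompact K)
    (hKpos : ∀ A ∈ K, IsSymPosDef A) :
    ∃ Λ : Finset (Fin 3 → ℚ), (∀ k ∈ Λ, k ≠ 0) ∧
      ∃ a : (Fin 3 → ℚ) → M3 → ℝ,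
        (∀ k ∈ Λ, ∃ U : Set M3, IsOpen U ∧ K ⊆ U ∧ ContDiffOn ℝ (⊤ : ℕ∞) (a k) U) ∧
        (∀ k ∈ Λ, ∀ A ∈ K, 0 < a k A) ∧
        (∀ A ∈ K, ∀ i j, ∑ k ∈ Λ, (a k A) ^ 2 * (k i : ℝ) * (k j : ℝ) = A i j) := by
  classical
  -- choose rational congruence data for each point of K
  have hch : ∀ x : ↥K, ∃ p : Fin 3 → Fin 3 → ℚ,
      (Matrix.of p).det ≠ 0 ∧ MikadoNearId (mikadoConj (fun i j => (p i j : ℝ)) x.1) :=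
    fun x => mikado_exists_good_p (hKpos x.1 x.2)
  choose p hpdet hpnear using hch
  set P : ↥K → M3 := fun x => fun i j => (p x i j : ℝ) with hPdef
  set U : ↥K → Set M3 := fun x => {R : M3 | MikadoNearId (mikadoConj (P x) R)} with hUdef
  have hUo : ∀ x, IsOpen (U x) := fun x => mikado_isOpen_nearId (P x)
  have hcov : K ⊆ ⋃ x : ↥K, U x := by
    intro A hA
    exact Set.mem_iUnion.2 ⟨⟨A, hA⟩, hpnear ⟨A, hA⟩⟩
  obtain ⟨t, ht⟩ := hKcompact.elim_finite_subcover U hUo hcov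
  -- partition of unity over the finite subcover
  have hKclosed : IsClosed K := hKcompact.isClosed
  have hcov2 : K ⊆ ⋃ α : ↥t, U α.1 := by
    intro A hA
    obtain ⟨x, hx⟩ := Set.mem_iUnion.1 (ht hA)
    simp only [Set.mem_iUnion] at hx
    obtain ⟨hxt, hAx⟩ := hx
    exact Set.mem_iUnion.2 ⟨⟨x, hxt⟩, hAx⟩
  obtain ⟨f, hf⟩ := SmoothPartitionOfUnity.exists_isSubordinate
    (I := modelWithCornersSelf ℝ M3) hKclosed (fun α : ↥t => U α.1)
    (fun α => hUo α.1) hcov2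
  set φ : ↥t → M3 → ℝ := fun α R => f α R with hφdef
  have hφsmooth : ∀ α, ContDiff ℝ (⊤:ℕ∞) (φ α) := fun α => ((f α).contMDiff).contDiff
  have hφnonneg : ∀ α R, 0 ≤ φ α R := fun α R => f.nonneg α R
  have hφsum : ∀ A ∈ K, ∑ α : ↥t, φ α A = 1 := by
    intro A hA
    have h1 := f.sum_eq_one hA
    rw [← finsum_eq_sum_of_fintype]
    exact h1
  have hφsupp : ∀ α, tsupport (φ α) ⊆ U α.1 := fun α => hf α
  -- the family of rational vectors
  set w : ↥t × Fin 9 → (Fin 3 → ℚ) :=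
    fun z => Matrix.mulVec (Matrix.of (p z.1.1))⁻¹ (mikadoBv z.2) with hwdef
  set Λ : Finset (Fin 3 → ℚ) := Finset.image w Finset.univ with hΛdef
  have hwne : ∀ z, w z ≠ 0 := by
    intro z hz
    apply mikadoBv_ne_zero z.2
    have hunit : IsUnit (Matrix.of (p z.1.1)).det := isUnit_iff_ne_zero.mpr (hpdet z.1.1)
    have hzz : Matrix.mulVec (Matrix.of (p z.1.1))⁻¹ (mikadoBv z.2) = 0 := hz
    have h1 : mikadoBv z.2 = Matrix.mulVec (Matrix.of (p z.1.1))
        (Matrix.mulVec (Matrix.of (p z.1.1))⁻¹ (mikadoBv z.2)) := by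
      rw [Matrix.mulVec_mulVec, Matrix.mul_nonsing_inv _ hunit, Matrix.one_mulVec]
    rw [h1, hzz, Matrix.mulVec_zero]
  -- the matrix S = ∑ k⊗k
  set S : M3 := fun i j => ∑ k ∈ Λ, (k i : ℝ) * (k j : ℝ) with hSdef
  have hSsymm : ∀ i j, S i j = S j i := by
    intro i j
    exact Finset.sum_congr rfl fun k _ => by ring
  -- choose ε
  set C : ℝ := 1 + ∑ i, ∑ j, |S i j| with hCdef
  have hCpos : 0 < C := by
    have h1 : (0:ℝ) ≤ ∑ i, ∑ j, |S i j| :=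
      Finset.sum_nonneg fun i _ => Finset.sum_nonneg fun j _ => abs_nonneg _
    rw [hCdef]; linarith
  have hCge : ∀ i j, |S i j| < C := by
    intro i j
    have h1 : |S i j| ≤ ∑ i', ∑ j', |S i' j'| := by
      calc |S i j| ≤ ∑ j', |S i j'| :=
            Finset.single_le_sum (fun j' _ => abs_nonneg (S i j')) (Finset.mem_univ j)
        _ ≤ ∑ i', ∑ j', |S i' j'| :=
            Finset.single_le_sum (f := fun i' => ∑ j', |S i' j'|)
              (fun i' _ => Finset.sum_nonneg fun j' _ => abs_nonneg _) (Finset.mem_univ i)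
    rw [hCdef]; linarith
  -- thickening radii
  have hthick : ∀ α : ↥t, ∃ δ : ℝ, 0 < δ ∧
      Metric.thickening δ (K ∩ tsupport (φ α)) ⊆ U α.1 := by
    intro α
    have hcomp : IsCompact (K ∩ tsupport (φ α)) :=
      hKcompact.inter_right (isClosed_tsupport _)
    have hsub : K ∩ tsupport (φ α) ⊆ U α.1 := fun R hR => hφsupp α hR.2
    obtain ⟨δ, hδpos, hδ⟩ := hcomp.exists_thickening_subset_open (hUo α.1) hsub
    exact ⟨δ, hδpos, hδ⟩
  choose δ hδpos hδsub using hthick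
  obtain ⟨ε₀, hε₀pos, hε₀lt⟩ := mikado_exists_pos_lt δ hδpos
  set ε : ℝ := ε₀ / C with hεdef
  have hεpos : 0 < ε := div_pos hε₀pos hCpos
  -- the shifted matrix map
  set shift : M3 → M3 := fun R => fun i j => R i j - ε * S i j with hshiftdef
  have hshift_mem : ∀ (α : ↥t) (R : M3), R ∈ K ∩ tsupport (φ α) → shift R ∈ U α.1 := by
    intro α R hR
    apply hδsub α
    rw [Metric.mem_thickening_iff]
    refine ⟨R, hR, ?_⟩
    rw [dist_pi_lt_iff (hδpos α)]
    intro i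
    rw [dist_pi_lt_iff (hδpos α)]
    intro j
    rw [Real.dist_eq]
    have h1 : shift R i j - R i j = -(ε * S i j) := by simp only [hshiftdef]; ring
    rw [h1, abs_neg, abs_mul, abs_of_pos hεpos]
    have h2 : |S i j| < C := hCge i j
    have h3 : ε * |S i j| ≤ ε * C := by
      apply mul_le_mul_of_nonneg_left (le_of_lt h2) (le_of_lt hεpos)
    have h4 : ε * C = ε₀ := by rw [hεdef]; field_simp
    calc ε * |S i j| ≤ ε * C := h3
      _ = ε₀ := h4
      _ < δ α := hε₀lt α
  -- coefficient functions
  set cc : ↥t → Fin 9 → M3 → ℝ :=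
    fun α m R => mikadoGam m (mikadoConj (P α.1) R) with hccdef
  have hccpos : ∀ (α : ↥t) (m : Fin 9) (R : M3), R ∈ U α.1 → 0 < cc α m R := by
    intro α m R hR
    exact mikadoGam_pos hR m
  have hccsmooth : ∀ (α : ↥t) (m : Fin 9), ContDiff ℝ (⊤:ℕ∞) (cc α m) :=
    fun α m => mikado_contDiff_gam_conj (P α.1) m
  have hshiftsmooth : ContDiff ℝ (⊤:ℕ∞) shift := by
    simp only [hshiftdef]
    apply contDiff_pi.2
    intro i
    apply contDiff_pi.2
    intro j
    exact (mikado_contDiff_entry i j).sub contDiff_const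
  -- the squared-coefficient functions
  set b : (Fin 3 → ℚ) → M3 → ℝ := fun k R => ε +
    ∑ α : ↥t, ∑ m : Fin 9, (if w (α, m) = k then φ α R * cc α m (shift R) else 0) with hbdef
  have hbsmooth : ∀ k, ContDiff ℝ (⊤:ℕ∞) (b k) := by
    intro k
    simp only [hbdef]
    apply ContDiff.add contDiff_const
    apply ContDiff.sum
    intro α _
    apply ContDiff.sum
    intro m _
    by_cases h : w (α, m) = k
    · simp only [h, if_true]
      exact (hφsmooth α).mul ((hccsmooth α m).comp hshiftsmooth)
    · simp only [h, if_false]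
      exact contDiff_const
  have hbpos : ∀ k, ∀ A ∈ K, 0 < b k A := by
    intro k A hA
    simp only [hbdef]
    have h1 : ∀ α : ↥t, ∀ m : Fin 9,
        0 ≤ (if w (α, m) = k then φ α A * cc α m (shift A) else 0) := by
      intro α m
      by_cases h : w (α, m) = k
      · simp only [h, if_true]
        rcases eq_or_lt_of_le (hφnonneg α A) with h2 | h2
        · rw [← h2, zero_mul]
        · apply le_of_lt
          apply mul_pos h2
          apply hccpos
          apply hshift_mem
          refine ⟨hA, ?_⟩
          have hsupp : A ∈ Function.support (φ α) := by
            rw [Function.mem_support]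
            exact ne_of_gt h2
          exact subset_tsupport (φ α) hsupp
      · simp only [h, if_false]; exact le_refl 0
    have h2 : 0 ≤ ∑ α : ↥t, ∑ m : Fin 9,
        (if w (α, m) = k then φ α A * cc α m (shift A) else 0) :=
      Finset.sum_nonneg fun α _ => Finset.sum_nonneg fun m _ => h1 α m
    linarith
  refine ⟨Λ, ?_, fun k R => Real.sqrt (b k R), ?_, ?_, ?_⟩
  · -- nonzero vectors
    intro k hk
    obtain ⟨z, _, hz⟩ := Finset.mem_image.1 hk
    rw [← hz]
    exact hwne z
  · -- smoothness on an open neighbourhood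
    intro k hk
    refine ⟨(b k) ⁻¹' (Set.Ioi 0), ?_, ?_, ?_⟩
    · exact (hbsmooth k).continuous.isOpen_preimage _ isOpen_Ioi
    · intro A hA
      exact hbpos k A hA
    · intro R hR
      have h1 : ContDiffAt ℝ (⊤:ℕ∞) (fun R => Real.sqrt (b k R)) R := by
        apply ContDiffAt.sqrt
        · exact (hbsmooth k).contDiffAt
        · exact ne_of_gt hR
      exact h1.contDiffWithinAt
  · -- positivity
    intro k hk A hA
    exact Real.sqrt_pos.2 (hbpos k A hA)
  · -- the representation identity
    intro A hA i j
    have hAsymm : ∀ i j, A i j = A j i := (hKpos A hA).1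
    have hsq : ∀ k, (Real.sqrt (b k A))^2 = b k A := fun k =>
      Real.sq_sqrt (le_of_lt (hbpos k A hA))
    have key : ∀ k ∈ Λ, b k A * (k i : ℝ) * (k j : ℝ)
        = ε * ((k i : ℝ) * (k j : ℝ)) + ∑ α : ↥t, ∑ m : Fin 9,
            (if w (α, m) = k then φ α A * cc α m (shift A) * (k i : ℝ) * (k j : ℝ) else 0) := by
      intro k _
      simp only [hbdef]
      simp only [add_mul, Finset.sum_mul, ite_mul, zero_mul]
      congr 1
      ring
    have hshiftsymm : ∀ i' j', shift A i' j' = shift A j' i' := by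
      intro i' j'
      simp only [hshiftdef]
      rw [hAsymm i' j', hSsymm i' j']
    have hperα : ∀ α : ↥t,
        ∑ m : Fin 9, φ α A * cc α m (shift A) * ((w (α, m)) i : ℝ) * ((w (α, m)) j : ℝ)
          = φ α A * shift A i j := by
      intro α
      have htr := mikado_transported (p α.1) (hpdet α.1) (shift A) hshiftsymm i j
      calc ∑ m : Fin 9, φ α A * cc α m (shift A) * ((w (α, m)) i : ℝ) * ((w (α, m)) j : ℝ)
          = φ α A * ∑ m : Fin 9, cc α m (shift A) * ((w (α, m)) i : ℝ) * ((w (α, m)) j : ℝ) := by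
            rw [Finset.mul_sum]
            exact Finset.sum_congr rfl fun m _ => by ring
        _ = φ α A * shift A i j := by rw [htr]
    calc ∑ k ∈ Λ, (Real.sqrt (b k A))^2 * (k i : ℝ) * (k j : ℝ)
        = ∑ k ∈ Λ, b k A * (k i : ℝ) * (k j : ℝ) :=
          Finset.sum_congr rfl fun k _ => by rw [hsq]
      _ = ∑ k ∈ Λ, (ε * ((k i : ℝ) * (k j : ℝ)) + ∑ α : ↥t, ∑ m : Fin 9,
            (if w (α, m) = k then φ α A * cc α m (shift A) * (k i : ℝ) * (k j : ℝ) else 0)) :=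
          Finset.sum_congr rfl key
      _ = ε * S i j + ∑ k ∈ Λ, ∑ α : ↥t, ∑ m : Fin 9,
            (if w (α, m) = k then φ α A * cc α m (shift A) * (k i : ℝ) * (k j : ℝ) else 0) := by
          rw [Finset.sum_add_distrib, ← Finset.mul_sum]
      _ = ε * S i j + ∑ α : ↥t, ∑ m : Fin 9, ∑ k ∈ Λ,
            (if w (α, m) = k then φ α A * cc α m (shift A) * (k i : ℝ) * (k j : ℝ) else 0) := by
          congr 1
          rw [Finset.sum_comm]
          exact Finset.sum_congr rfl fun α _ => Finset.sum_comm
      _ = ε * S i j + ∑ α : ↥t, ∑ m : Fin 9,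
            φ α A * cc α m (shift A) * ((w (α, m)) i : ℝ) * ((w (α, m)) j : ℝ) := by
          congr 1
          refine Finset.sum_congr rfl fun α _ => Finset.sum_congr rfl fun m _ => ?_
          rw [Finset.sum_ite_eq Λ (w (α, m))
            (fun k => φ α A * cc α m (shift A) * (k i : ℝ) * (k j : ℝ))]
          have hmem : w (α, m) ∈ Λ := Finset.mem_image.2 ⟨(α, m), Finset.mem_univ _, rfl⟩
          rw [if_pos hmem]
      _ = ε * S i j + ∑ α : ↥t, φ α A * shift A i j := by
          congr 1
          exact Finset.sum_congr rfl fun α _ => hperα α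
      _ = ε * S i j + (∑ α : ↥t, φ α A) * shift A i j := by rw [Finset.sum_mul]
      _ = ε * S i j + shift A i j := by rw [hφsum A hA, one_mul]
      _ = A i j := by simp only [hshiftdef]; ring

end
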